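/- Let N ≥ 1 and let U be an N×N complex unitary matrix. If f, g : [N] → {−1,1} are chosen independently and uniformly at random (each of the 2^N sign functions equally likely, independently for f and g), then the expectation of the acceptance probability p_U(f,g) := |(1/N) ∑_{x,y∈[N]} g(y) · U_{y,x} · f(x)|² equals exactly 1/N. -/

import Mathlib

open scoped BigOperators

lemma EAPU_sign_conj (h : Bool) : (starRingEnd ℂ) (if h then (1:ℂ) else -1) = if h then (1:ℂ) else -1 := by
  cases h <;> simp

lemma EAPU_sign_sq (h : Bool) : (if h then (1:ℂ) else -1) * (if h then (1:ℂ) else -1) = 1 := by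
  cases h <;> simp

lemma EAPU_sign_sum (N : ℕ) (x x' : Fin N) :
    (∑ f : Fin N → Bool, (if f x then (1:ℂ) else -1) * (if f x' then (1:ℂ) else -1))
      = if x = x' then (2^N : ℂ) else 0 := by
  by_cases h : x = x'
  · subst h
    simp only [if_pos rfl, EAPU_sign_sq, Finset.sum_const, Finset.card_univ, nsmul_eq_mul, mul_one]
    simp
  · rw [if_neg h]
    set A : (Fin N → Bool) → ℂ :=
      fun f => (if f x then (1:ℂ) else -1) * (if f x' then (1:ℂ) else -1) with hA
    set σ : (Fin N → Bool) → (Fin N → Bool) := fun f => Function.update f x (!f x) with hσ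
    have hinv : Function.Involutive σ := by
      intro f
      funext i
      by_cases hi : i = x
      · subst hi; simp [hσ]
      · simp [hσ, Function.update_of_ne hi]
    have h1 : (∑ f : Fin N → Bool, A f) = ∑ f : Fin N → Bool, A (σ f) :=
      (Function.Bijective.sum_comp hinv.bijective _).symm
    have h2 : ∀ f : Fin N → Bool, A (σ f) = - A f := by
      intro f
      have hx : σ f x = !f x := by simp [hσ]
      have hx' : σ f x' = f x' := by simp [hσ, Function.update_of_ne (Ne.symm h)]
      simp only [hA, hx, hx']
      cases f x <;> cases f x' <;> simp
    have h4 : ∑ f : Fin N → Bool, (A f + A (σ f)) = 0 := by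
      apply Finset.sum_eq_zero; intro f _; rw [h2 f]; ring
    rw [Finset.sum_add_distrib, ← h1] at h4
    exact add_self_eq_zero.mp h4

lemma EAPU_main (N : ℕ) (U : Matrix (Fin N) (Fin N) ℂ)
    (hU : U ∈ Matrix.unitaryGroup (Fin N) ℂ) :
    (∑ f : Fin N → Bool, ∑ g : Fin N → Bool,
      (∑ x : Fin N, ∑ y : Fin N,
          (if g y then (1 : ℂ) else -1) * U y x * (if f x then (1 : ℂ) else -1)) *
      (starRingEnd ℂ) (∑ x : Fin N, ∑ y : Fin N,
          (if g y then (1 : ℂ) else -1) * U y x * (if f x then (1 : ℂ) else -1)))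
      = (2^N : ℂ) * (2^N : ℂ) * (N : ℂ) := by
  classical
  -- w f y : entries of U applied to the sign vector of f
  set w : (Fin N → Bool) → Fin N → ℂ :=
    fun f y => ∑ x : Fin N, U y x * (if f x then (1:ℂ) else -1) with hw
  -- rewrite the inner double sum
  have hZ : ∀ (f g : Fin N → Bool),
      (∑ x : Fin N, ∑ y : Fin N,
          (if g y then (1 : ℂ) else -1) * U y x * (if f x then (1 : ℂ) else -1))
        = ∑ y : Fin N, (if g y then (1:ℂ) else -1) * w f y := by
    intro f g
    rw [Finset.sum_comm]
    refine Finset.sum_congr rfl fun y _ => ?_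
    rw [hw, Finset.mul_sum]
    refine Finset.sum_congr rfl fun x _ => ?_
    ring
  -- step B: ∑ y, w f y * conj (w f y) = N
  have hrow : ∀ x x' : Fin N,
      (∑ y : Fin N, (starRingEnd ℂ) (U y x') * U y x) = if x' = x then 1 else 0 := by
    intro x x'
    have h1 : (star U * U) x' x = (1 : Matrix (Fin N) (Fin N) ℂ) x' x := by rw [hU.1]
    rw [Matrix.mul_apply, Matrix.one_apply] at h1
    simpa [Matrix.star_apply] using h1
  have hB : ∀ f : Fin N → Bool,
      (∑ y : Fin N, w f y * (starRingEnd ℂ) (w f y)) = (N : ℂ) := by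
    intro f
    have hconjw : ∀ y, (starRingEnd ℂ) (w f y)
        = ∑ x' : Fin N, (starRingEnd ℂ) (U y x') * (if f x' then (1:ℂ) else -1) := by
      intro y
      rw [hw, map_sum]
      refine Finset.sum_congr rfl fun x' _ => ?_
      rw [map_mul, EAPU_sign_conj]
    calc (∑ y : Fin N, w f y * (starRingEnd ℂ) (w f y))
        = ∑ y : Fin N, ∑ x : Fin N, ∑ x' : Fin N,
            ((starRingEnd ℂ) (U y x') * U y x) *
              ((if f x then (1:ℂ) else -1) * (if f x' then (1:ℂ) else -1)) := by
          refine Finset.sum_congr rfl fun y _ => ?_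
          rw [hconjw y, hw, Finset.sum_mul_sum]
          refine Finset.sum_congr rfl fun x _ => Finset.sum_congr rfl fun x' _ => ?_
          ring
      _ = ∑ x : Fin N, ∑ x' : Fin N,
            (∑ y : Fin N, (starRingEnd ℂ) (U y x') * U y x) *
              ((if f x then (1:ℂ) else -1) * (if f x' then (1:ℂ) else -1)) := by
          rw [Finset.sum_comm]
          refine Finset.sum_congr rfl fun x _ => ?_
          rw [Finset.sum_comm]
          refine Finset.sum_congr rfl fun x' _ => ?_
          exact (Finset.sum_mul _ _ _).symm
      _ = ∑ x : Fin N, (1:ℂ) := by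
          refine Finset.sum_congr rfl fun x _ => ?_
          simp only [hrow]
          rw [Finset.sum_eq_single x]
          · rw [if_pos rfl, one_mul, EAPU_sign_sq]
          · intro x' _ hx'; simp [hx']
          · intro hx; exact absurd (Finset.mem_univ x) hx
      _ = (N : ℂ) := by simp
  -- step A: for fixed f, sum over g
  have hA : ∀ f : Fin N → Bool,
      (∑ g : Fin N → Bool,
        (∑ y : Fin N, (if g y then (1:ℂ) else -1) * w f y) *
        (starRingEnd ℂ) (∑ y : Fin N, (if g y then (1:ℂ) else -1) * w f y))
      = (2^N : ℂ) * (N : ℂ) := by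
    intro f
    have hconjZ : ∀ g : Fin N → Bool,
        (starRingEnd ℂ) (∑ y : Fin N, (if g y then (1:ℂ) else -1) * w f y)
          = ∑ y' : Fin N, (if g y' then (1:ℂ) else -1) * (starRingEnd ℂ) (w f y') := by
      intro g
      rw [map_sum]
      refine Finset.sum_congr rfl fun y' _ => ?_
      rw [map_mul, EAPU_sign_conj]
    calc (∑ g : Fin N → Bool,
          (∑ y : Fin N, (if g y then (1:ℂ) else -1) * w f y) *
          (starRingEnd ℂ) (∑ y : Fin N, (if g y then (1:ℂ) else -1) * w f y))
        = ∑ g : Fin N → Bool, ∑ y : Fin N, ∑ y' : Fin N,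
            ((if g y then (1:ℂ) else -1) * (if g y' then (1:ℂ) else -1)) *
              (w f y * (starRingEnd ℂ) (w f y')) := by
          refine Finset.sum_congr rfl fun g _ => ?_
          rw [hconjZ g, Finset.sum_mul_sum]
          refine Finset.sum_congr rfl fun y _ => Finset.sum_congr rfl fun y' _ => ?_
          ring
      _ = ∑ y : Fin N, ∑ y' : Fin N,
            (∑ g : Fin N → Bool, (if g y then (1:ℂ) else -1) * (if g y' then (1:ℂ) else -1)) *
              (w f y * (starRingEnd ℂ) (w f y')) := by
          rw [Finset.sum_comm]
          refine Finset.sum_congr rfl fun y _ => ?_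
          rw [Finset.sum_comm]
          refine Finset.sum_congr rfl fun y' _ => ?_
          exact (Finset.sum_mul _ _ _).symm
      _ = ∑ y : Fin N, (2^N : ℂ) * (w f y * (starRingEnd ℂ) (w f y)) := by
          refine Finset.sum_congr rfl fun y _ => ?_
          simp only [EAPU_sign_sum]
          rw [Finset.sum_eq_single y]
          · simp
          · intro y' _ hy'; simp [Ne.symm hy']
          · intro hy; exact absurd (Finset.mem_univ y) hy
      _ = (2^N : ℂ) * (N : ℂ) := by
          rw [← Finset.mul_sum, hB f]
  -- assemble
  calc (∑ f : Fin N → Bool, ∑ g : Fin N → Bool,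
          (∑ x : Fin N, ∑ y : Fin N,
              (if g y then (1 : ℂ) else -1) * U y x * (if f x then (1 : ℂ) else -1)) *
          (starRingEnd ℂ) (∑ x : Fin N, ∑ y : Fin N,
              (if g y then (1 : ℂ) else -1) * U y x * (if f x then (1 : ℂ) else -1)))
      = ∑ f : Fin N → Bool, (2^N : ℂ) * (N : ℂ) := by
        refine Finset.sum_congr rfl fun f _ => ?_
        rw [← hA f]
        refine Finset.sum_congr rfl fun g _ => ?_
        rw [hZ f g]
    _ = (2^N : ℂ) * (2^N : ℂ) * (N : ℂ) := by
        rw [Finset.sum_const, Finset.card_univ]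
        simp [mul_comm, mul_assoc, mul_left_comm]

theorem expectation_acceptance_probability_uniform
    (N : ℕ) (hN : 1 ≤ N) (U : Matrix (Fin N) (Fin N) ℂ)
    (hU : U ∈ Matrix.unitaryGroup (Fin N) ℂ) :
    (1 / ((2 ^ N : ℝ) * (2 ^ N : ℝ))) *
        ∑ f : Fin N → Bool, ∑ g : Fin N → Bool,
          ‖(1 / (N : ℂ)) * ∑ x : Fin N, ∑ y : Fin N,
              (if g y then (1 : ℂ) else -1) * U y x * (if f x then (1 : ℂ) else -1)‖ ^ 2
      = 1 / (N : ℝ) := by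
  classical
  have hNR : (N : ℝ) ≠ 0 := by
    have : 0 < N := hN
    positivity
  have h2R : ((2:ℝ)^N) ≠ 0 := by positivity
  have hterm : ∀ (z : ℂ), ‖(1 / (N:ℂ)) * z‖^2
      = (1/(N:ℝ))^2 * (z * (starRingEnd ℂ) z).re := by
    intro z
    rw [norm_mul, mul_pow, Complex.mul_conj, Complex.ofReal_re]
    congr 1
    · rw [norm_div, norm_one, Complex.norm_natCast]
    · rw [← Complex.sq_norm]
  have hcast : ((2^N : ℂ) * (2^N : ℂ) * (N : ℂ))
      = (((2:ℝ)^N * (2:ℝ)^N * (N:ℝ) : ℝ) : ℂ) := by push_cast; ring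
  have hsum : (∑ f : Fin N → Bool, ∑ g : Fin N → Bool,
        ‖(1 / (N : ℂ)) * ∑ x : Fin N, ∑ y : Fin N,
            (if g y then (1 : ℂ) else -1) * U y x * (if f x then (1 : ℂ) else -1)‖ ^ 2)
      = (1/(N:ℝ))^2 * ((2:ℝ)^N * (2:ℝ)^N * (N:ℝ)) := by
    calc (∑ f : Fin N → Bool, ∑ g : Fin N → Bool,
          ‖(1 / (N : ℂ)) * ∑ x : Fin N, ∑ y : Fin N,
              (if g y then (1 : ℂ) else -1) * U y x * (if f x then (1 : ℂ) else -1)‖ ^ 2)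
        = ∑ f : Fin N → Bool, ∑ g : Fin N → Bool, (1/(N:ℝ))^2 *
            ((∑ x : Fin N, ∑ y : Fin N,
                (if g y then (1 : ℂ) else -1) * U y x * (if f x then (1 : ℂ) else -1)) *
             (starRingEnd ℂ) (∑ x : Fin N, ∑ y : Fin N,
                (if g y then (1 : ℂ) else -1) * U y x * (if f x then (1 : ℂ) else -1))).re := by
          refine Finset.sum_congr rfl fun f _ => Finset.sum_congr rfl fun g _ => ?_
          exact hterm _
      _ = (1/(N:ℝ))^2 * ∑ f : Fin N → Bool, ∑ g : Fin N → Bool,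
            ((∑ x : Fin N, ∑ y : Fin N,
                (if g y then (1 : ℂ) else -1) * U y x * (if f x then (1 : ℂ) else -1)) *
             (starRingEnd ℂ) (∑ x : Fin N, ∑ y : Fin N,
                (if g y then (1 : ℂ) else -1) * U y x * (if f x then (1 : ℂ) else -1))).re := by
          rw [Finset.mul_sum]
          refine Finset.sum_congr rfl fun f _ => ?_
          rw [Finset.mul_sum]
      _ = (1/(N:ℝ))^2 * (∑ f : Fin N → Bool, ∑ g : Fin N → Bool,
            ((∑ x : Fin N, ∑ y : Fin N,
                (if g y then (1 : ℂ) else -1) * U y x * (if f x then (1 : ℂ) else -1)) *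
             (starRingEnd ℂ) (∑ x : Fin N, ∑ y : Fin N,
                (if g y then (1 : ℂ) else -1) * U y x * (if f x then (1 : ℂ) else -1)))).re := by
          congr 1
          rw [Complex.re_sum]
          refine Finset.sum_congr rfl fun f _ => ?_
          rw [Complex.re_sum]
      _ = (1/(N:ℝ))^2 * ((2:ℝ)^N * (2:ℝ)^N * (N:ℝ)) := by
          rw [EAPU_main N U hU, hcast, Complex.ofReal_re]
  rw [hsum]
  field_simp
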